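/- Every nilpotent subgroup Γ of the isometry group Isom(ℝ^k) of Euclidean space ℝ^k is virtually abelian; that is, Γ contains an abelian subgroup of finite index. -/

import Mathlib

open scoped commutatorElement

section CommPow
variable {G : Type*} [Group G] {a b c : G}

lemma comm_pow_right (h : a * b = c * (b * a)) (hb : Commute c b) :
    ∀ n : ℕ, a * b ^ n = c ^ n * (b ^ n * a) := by
  intro n
  induction n with
  | zero => simp
  | succ n ih =>
    have hcb : Commute (c ^ n) b := (hb.symm.pow_right n).symm
    calc a * b ^ (n + 1) = (a * b ^ n) * b := by rw [pow_succ, mul_assoc]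
      _ = c ^ n * (b ^ n * a) * b := by rw [ih]
      _ = c ^ n * (b ^ n * (a * b)) := by group
      _ = c ^ n * (b ^ n * (c * (b * a))) := by rw [h]
      _ = c ^ n * (b ^ n * c) * (b * a) := by group
      _ = c ^ n * (c * b ^ n) * (b * a) := by rw [(hb.pow_right n).eq]
      _ = c ^ (n + 1) * (b ^ (n + 1) * a) := by rw [pow_succ, pow_succ]; group

lemma comm_pow (h : a * b = c * (b * a)) (ha : Commute c a) (hb : Commute c b) :
    ∀ m n : ℕ, a ^ m * b ^ n = c ^ (m * n) * (b ^ n * a ^ m) := by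
  intro m n
  induction m with
  | zero => simp
  | succ m ih =>
    have h1 : Commute (c ^ n) (a ^ m) := ha.pow_pow n m
    calc a ^ (m + 1) * b ^ n = a ^ m * (a * b ^ n) := by rw [pow_succ']; group
      _ = a ^ m * (c ^ n * (b ^ n * a)) := by rw [comm_pow_right h hb n]
      _ = (a ^ m * c ^ n) * (b ^ n * a) := by group
      _ = (c ^ n * a ^ m) * (b ^ n * a) := by rw [h1.symm.eq]
      _ = c ^ n * (a ^ m * b ^ n) * a := by group
      _ = c ^ n * (c ^ (m * n) * (b ^ n * a ^ m)) * a := by rw [ih]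
      _ = c ^ (n + m * n) * (b ^ n * a ^ (m + 1)) := by rw [pow_add, pow_succ]; group
      _ = c ^ ((m + 1) * n) * (b ^ n * a ^ (m + 1)) := by ring_nf

end CommPow

section FixLemma
variable {E : Type*} [NormedAddCommGroup E] [InnerProductSpace ℝ E]

lemma isometry_iter_fix (t : E ≃ₗᵢ[ℝ] E) :
    ∀ (m : ℕ) (u : E), (fun v => v - t v)^[m] u = 0 → u - t u = 0 := by
  intro m
  induction m with
  | zero =>
    intro u hu
    simp only [Function.iterate_zero, id_eq] at hu
    simp [hu]
  | succ m ih =>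
    intro u hu
    rw [Function.iterate_succ_apply] at hu
    have h2 : (u - t u) - t (u - t u) = 0 := ih _ hu
    -- so t fixes d := u - t u
    have h3 : t (u - t u) = u - t u := by
      have := sub_eq_zero.mp h2
      exact this.symm
    have h4 : (inner ℝ (u - t u) (u - t u) : ℝ) = 0 := by
      have h5 : (inner ℝ u (u - t u) : ℝ) = inner ℝ (t u) (t (u - t u)) := by
        rw [t.inner_map_map]
      rw [inner_sub_left, h5, h3]
      ring
    have h6 : u - t u = 0 := by
      rwa [inner_self_eq_zero] at h4
    exact h6
end FixLemma

section LinPart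
variable {E : Type*} [NormedAddCommGroup E] [InnerProductSpace ℝ E]

/-- The linear part of an isometry of a real inner product space, as a group hom. -/
noncomputable def linHom : (E ≃ᵢ E) →* (E ≃ₗᵢ[ℝ] E) where
  toFun f := f.toRealLinearIsometryEquiv
  map_one' := by
    ext x
    simp [IsometryEquiv.toRealLinearIsometryEquiv_apply]
  map_mul' f g := by
    ext x
    have h1 : ∀ y : E, f.toRealLinearIsometryEquiv y = f y - f 0 :=
      fun y => f.toRealLinearIsometryEquiv_apply y
    have h2 : f.toRealLinearIsometryEquiv (g x - g 0)
        = f.toRealLinearIsometryEquiv (g x) - f.toRealLinearIsometryEquiv (g 0) :=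
      map_sub _ _ _
    simp only [h1] at h2
    simp only [IsometryEquiv.toRealLinearIsometryEquiv_apply, IsometryEquiv.mul_apply,
      LinearIsometryEquiv.coe_mul, Function.comp_apply]
    rw [h2]
    abel

lemma linHom_apply (f : E ≃ᵢ E) (x : E) : linHom f x = f x - f 0 :=
  f.toRealLinearIsometryEquiv_apply x

lemma apply_eq_linHom (f : E ≃ᵢ E) (x : E) : f x = linHom f x + f 0 := by
  rw [linHom_apply]; abel

/-- a pure translation -/
lemma translation_apply {f : E ≃ᵢ E} (hf : linHom f = 1) (x : E) : f x = x + f 0 := by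
  rw [apply_eq_linHom f x, hf]; rfl

lemma conj_translation {f q : E ≃ᵢ E} (hf : linHom f = 1) (x : E) :
    (q * f * q⁻¹) x = x + linHom q (f 0) := by
  have h1 : (q * f * q⁻¹) x = q (f (q⁻¹ x)) := rfl
  rw [h1, translation_apply hf, apply_eq_linHom q, map_add]
  have h4 : linHom q (q⁻¹ x) + q 0 = x := by
    rw [linHom_apply]
    have : q (q⁻¹ x) = x := q.apply_inv_self x
    rw [this]; abel
  conv_rhs => rw [← h4]
  abel

lemma conj_translation_lin {f q : E ≃ᵢ E} (hf : linHom f = 1) :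
    linHom (q * f * q⁻¹) = 1 ∧ (q * f * q⁻¹) 0 = linHom q (f 0) := by
  constructor
  · ext x
    have h0 : (q * f * q⁻¹) 0 = 0 + linHom q (f 0) := conj_translation hf 0
    have hx : (q * f * q⁻¹) x = x + linHom q (f 0) := conj_translation hf x
    rw [linHom_apply, hx, h0]
    simp
  · rw [conj_translation hf 0, zero_add]

lemma commutator_translation {f q : E ≃ᵢ E} (hf : linHom f = 1) :
    linHom ⁅f, q⁆ = 1 ∧ ⁅f, q⁆ 0 = f 0 - linHom q (f 0) := by
  obtain ⟨h1, h2⟩ := conj_translation_lin (q := q) hf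
  have hc : ⁅f, q⁆ = f * (q * f * q⁻¹)⁻¹ := by group
  have hlin : linHom ⁅f, q⁆ = 1 := by
    rw [hc, map_mul, map_inv, h1, hf]; simp
  refine ⟨hlin, ?_⟩
  have hinv : ∀ x, (q * f * q⁻¹)⁻¹ x = x - linHom q (f 0) := by
    intro x
    have := conj_translation (q := q) hf (((q * f * q⁻¹))⁻¹ x)
    have h3 : (q * f * q⁻¹) ((q * f * q⁻¹)⁻¹ x) = x := IsometryEquiv.apply_inv_self _ x
    rw [h3] at this
    rw [eq_sub_iff_add_eq]
    exact this.symm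
  have : ⁅f, q⁆ 0 = f ((q * f * q⁻¹)⁻¹ 0) := by rw [hc]; rfl
  rw [this, hinv 0, translation_apply hf]
  abel
end LinPart

set_option linter.unusedSectionVars false

section EuclidCore
variable {E : Type*} [NormedAddCommGroup E] [InnerProductSpace ℝ E]

lemma pow_zero_norm (a : E ≃ᵢ E) : ∀ m : ℕ, ‖(a ^ m) 0‖ ≤ m * ‖a 0‖ := by
  intro m
  induction m with
  | zero => simp
  | succ m ih =>
    have h1 : (a ^ (m + 1)) 0 = (a ^ m) (a 0) := by
      rw [pow_succ]; rfl
    have h2 : ‖(a ^ m) (a 0) - (a ^ m) 0‖ = ‖a 0 - 0‖ := by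
      have := (a ^ m).isometry.dist_eq (a 0) 0
      rwa [dist_eq_norm, dist_eq_norm] at this
    have h3 : ‖(a ^ m) (a 0)‖ ≤ ‖(a ^ m) (a 0) - (a ^ m) 0‖ + ‖(a ^ m) 0‖ := by
      have := norm_add_le ((a ^ m) (a 0) - (a ^ m) 0) ((a ^ m) 0)
      simpa using this
    rw [h1]
    rw [h2] at h3
    simp only [sub_zero] at h3
    calc ‖(a ^ m) (a 0)‖ ≤ ‖a 0‖ + ‖(a ^ m) 0‖ := h3
      _ ≤ ‖a 0‖ + m * ‖a 0‖ := by linarith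
      _ = (m + 1 : ℕ) * ‖a 0‖ := by push_cast; ring

lemma apply_norm_le (a : E ≃ᵢ E) (y : E) : ‖a y‖ ≤ ‖y‖ + ‖a 0‖ := by
  have h2 : ‖a y - a 0‖ = ‖y - 0‖ := by
    have := a.isometry.dist_eq y 0
    rwa [dist_eq_norm, dist_eq_norm] at this
  have h3 : ‖a y‖ ≤ ‖a y - a 0‖ + ‖a 0‖ := by
    have := norm_add_le (a y - a 0) (a 0)
    simpa using this
  rw [h2] at h3
  simpa using h3

lemma translation_pow {c : E ≃ᵢ E} (hc : linHom c = 1) (j : ℕ) (x : E) :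
    (c ^ j) x = x + (j : ℕ) • c 0 := by
  induction j generalizing x with
  | zero => simp
  | succ j ih =>
    have h1 : (c ^ (j + 1)) x = (c ^ j) (c x) := by rw [pow_succ]; rfl
    rw [h1, translation_apply hc, ih (x + c 0), succ_nsmul]
    abel

/-- Core: a nilpotent group of isometries of a real inner product space whose
linear parts pairwise commute is abelian. -/
lemma euclid_core (K : Subgroup (E ≃ᵢ E)) (hK : Group.IsNilpotent ↥K)
    (hlin : ∀ p ∈ K, ∀ q ∈ K, linHom p * linHom q = linHom q * linHom p) :
    ∀ p ∈ K, ∀ q ∈ K, p * q = q * p := by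
  obtain ⟨n, hn⟩ := nilpotent_iff_lowerCentralSeries.mp hK
  set S : ℕ → Subgroup (E ≃ᵢ E) := fun j => (Subgroup.lowerCentralSeries (⊤ : Subgroup ↥K) j).map K.subtype with hS
  have hSdef : ∀ j, S j = (Subgroup.lowerCentralSeries (⊤ : Subgroup ↥K) j).map K.subtype := fun j => by rw [hS]
  have hS0 : S 0 = K := by
    rw [hSdef, lowerCentralSeries_zero, ← MonoidHom.range_eq_map]
    exact K.range_subtype
  -- all elements of S 1 are pure translations
  have htrans : ∀ p ∈ S 1, linHom (E := E) p = 1 := by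
    have h1 : S 1 ≤ (linHom (E := E)).ker := by
      rw [hSdef]
      have h2 : Subgroup.lowerCentralSeries (⊤ : Subgroup ↥K) 1 = ⁅(⊤ : Subgroup ↥K), ⊤⁆ := by
        rw [lowerCentralSeries_one, commutator_def]
      rw [h2, Subgroup.map_commutator, Subgroup.commutator_le]
      intro g1 hg1 g2 hg2
      obtain ⟨y1, _, rfl⟩ := hg1
      obtain ⟨y2, _, rfl⟩ := hg2
      have hcomm : Commute (linHom (E := E) (y1 : E ≃ᵢ E)) (linHom (E := E) (y2 : E ≃ᵢ E)) :=
        hlin _ y1.2 _ y2.2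
      rw [MonoidHom.mem_ker, map_commutatorElement]
      exact commutatorElement_eq_one_iff_commute.mpr hcomm
    intro p hp
    exact h1 hp
  -- membership propagation for commutators with K-elements
  have hmem : ∀ j, ∀ p ∈ S j, ∀ q ∈ K, ⁅p, q⁆ ∈ S (j + 1) := by
    intro j p hp q hq
    rw [hSdef] at hp ⊢
    obtain ⟨y, hy, rfl⟩ := hp
    have hmm : (⁅y, (⟨q, hq⟩ : ↥K)⁆ : ↥K) ∈ Subgroup.lowerCentralSeries (⊤ : Subgroup ↥K) (j + 1) := by
      rw [lowerCentralSeries_succ]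
      exact Subgroup.commutator_mem_commutator hy (Subgroup.mem_top _)
    refine ⟨_, hmm, ?_⟩
    rw [map_commutatorElement]
    rfl
  -- iteration: vectors of S 1 elements are fixed by linear parts of K
  have hfix : ∀ p ∈ S 1, ∀ q ∈ K, linHom q (p 0) = p 0 := by
    intro p hp q hq
    set t := linHom (E := E) q with ht
    have key : ∀ m : ℕ, ∀ p ∈ S 1,
        ∃ r ∈ S (1 + m), linHom (E := E) r = 1 ∧ r 0 = (fun v => v - t v)^[m] (p 0) := by
      intro m
      induction m with
      | zero =>
        intro p hp
        exact ⟨p, by simpa using hp, htrans p hp, by simp⟩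
      | succ m ih =>
        intro p hp
        obtain ⟨r, hr, hrlin, hr0⟩ := ih p hp
        refine ⟨⁅r, q⁆, ?_, ?_, ?_⟩
        · have h5 := hmem (1 + m) r hr q hq
          rw [show 1 + m + 1 = 1 + (m + 1) from by omega] at h5
          exact h5
        · exact (commutator_translation hrlin).1
        · rw [(commutator_translation hrlin).2, hr0, Function.iterate_succ_apply', ← ht]
    obtain ⟨r, hr, hrlin, hr0⟩ := key n p hp
    have hrS : r ∈ S n := by
      rw [hSdef] at hr ⊢
      exact Subgroup.map_mono (lowerCentralSeries_antitone _ (by omega : n ≤ 1 + n)) hr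
    have hr1 : r = 1 := by
      have hb : S n = ⊥ := by rw [hSdef, hn]; exact Subgroup.map_bot _
      rw [hb] at hrS
      exact Subgroup.mem_bot.mp hrS
    have h0 : (fun v => v - t v)^[n] (p 0) = 0 := by
      rw [← hr0, hr1]; rfl
    have h6 := isometry_iter_fix t n (p 0) h0
    have h7 := sub_eq_zero.mp h6
    rw [ht]
    exact h7.symm
  -- S 1 elements are central in K
  have hcentral : ∀ p ∈ S 1, ∀ q ∈ K, q * p * q⁻¹ = p := by
    intro p hp q hq
    have hlp := htrans p hp
    ext x
    rw [conj_translation hlp x, hfix p hp q hq, translation_apply hlp x]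
  -- now the growth argument
  intro p hp q hq
  set c := ⁅p, q⁆ with hc
  have hcS : c ∈ S 1 := by
    have h8 : p ∈ S 0 := by rw [hS0]; exact hp
    have h9 := hmem 0 p h8 q hq
    simpa using h9
  have hclin : linHom (E := E) c = 1 := htrans c hcS
  have hcp : Commute c p := by
    have h10 := hcentral c hcS p hp
    have h2 : c * p = p * c := by
      calc c * p = p * (p⁻¹ * c * p) := by group
        _ = p * c := by
            have : p⁻¹ * c * p = c := by
              have := hcentral c hcS p⁻¹ (K.inv_mem hp)
              simpa using this
            rw [this]
    exact h2
  have hcq : Commute c q := by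
    have h2 : c * q = q * c := by
      calc c * q = q * (q⁻¹ * c * q) := by group
        _ = q * c := by
            have : q⁻¹ * c * q = c := by
              have := hcentral c hcS q⁻¹ (K.inv_mem hq)
              simpa using this
            rw [this]
    exact h2
  have hpq : p * q = c * (q * p) := by rw [hc]; group
  have hiden : ∀ m : ℕ, p ^ m * q ^ m = c ^ (m * m) * (q ^ m * p ^ m) :=
    fun m => comm_pow hpq hcp hcq m m
  set u := c 0 with hu
  have hub : ∀ m : ℕ, (m * m : ℝ) * ‖u‖ ≤ 2 * m * (‖p 0‖ + ‖q 0‖) := by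
    intro m
    have e1 : (p ^ m * q ^ m) 0 = (p ^ m) ((q ^ m) 0) := rfl
    have e2 : (c ^ (m * m) * (q ^ m * p ^ m)) 0
        = (q ^ m) ((p ^ m) 0) + (m * m : ℕ) • u := by
      have : (c ^ (m * m) * (q ^ m * p ^ m)) 0 = (c ^ (m * m)) ((q ^ m) ((p ^ m) 0)) := rfl
      rw [this, translation_pow hclin]
    have e3 : (p ^ m) ((q ^ m) 0) = (q ^ m) ((p ^ m) 0) + (m * m : ℕ) • u := by
      rw [← e1, ← e2, hiden m]
    have e4 : ‖(m * m : ℕ) • u‖ ≤ ‖(p ^ m) ((q ^ m) 0)‖ + ‖(q ^ m) ((p ^ m) 0)‖ := by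
      have : (m * m : ℕ) • u = (p ^ m) ((q ^ m) 0) - (q ^ m) ((p ^ m) 0) := by
        rw [e3]; abel
      rw [this]
      exact norm_sub_le _ _
    have e5 : ‖(p ^ m) ((q ^ m) 0)‖ ≤ m * ‖q 0‖ + m * ‖p 0‖ := by
      calc ‖(p ^ m) ((q ^ m) 0)‖ ≤ ‖(q ^ m) 0‖ + ‖(p ^ m) 0‖ := apply_norm_le _ _
        _ ≤ m * ‖q 0‖ + m * ‖p 0‖ := by
            have := pow_zero_norm q m
            have := pow_zero_norm p m
            linarith
    have e6 : ‖(q ^ m) ((p ^ m) 0)‖ ≤ m * ‖p 0‖ + m * ‖q 0‖ := by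
      calc ‖(q ^ m) ((p ^ m) 0)‖ ≤ ‖(p ^ m) 0‖ + ‖(q ^ m) 0‖ := apply_norm_le _ _
        _ ≤ m * ‖p 0‖ + m * ‖q 0‖ := by
            have := pow_zero_norm q m
            have := pow_zero_norm p m
            linarith
    have e7 : ‖(m * m : ℕ) • u‖ = (m * m : ℝ) * ‖u‖ := by
      rw [← Nat.cast_smul_eq_nsmul ℝ, norm_smul]
      simp
    rw [e7] at e4
    calc (m * m : ℝ) * ‖u‖ ≤ ‖(p ^ m) ((q ^ m) 0)‖ + ‖(q ^ m) ((p ^ m) 0)‖ := e4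
      _ ≤ (m * ‖q 0‖ + m * ‖p 0‖) + (m * ‖p 0‖ + m * ‖q 0‖) := by linarith
      _ = 2 * m * (‖p 0‖ + ‖q 0‖) := by ring
  have huz : u = 0 := by
    by_contra hne
    have hpos : 0 < ‖u‖ := norm_pos_iff.mpr hne
    obtain ⟨m, hm⟩ := exists_nat_gt (2 * (‖p 0‖ + ‖q 0‖) / ‖u‖)
    have hC : 0 ≤ ‖p 0‖ + ‖q 0‖ := by positivity
    have hm1 : (1 : ℝ) ≤ m := by
      have : (0:ℝ) ≤ 2 * (‖p 0‖ + ‖q 0‖) / ‖u‖ := by positivity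
      have hm0 : (0:ℝ) < m := lt_of_le_of_lt this hm
      exact_mod_cast Nat.one_le_iff_ne_zero.mpr (by exact_mod_cast hm0.ne')
    have := hub m
    have h2 : (m : ℝ) * ‖u‖ > 2 * (‖p 0‖ + ‖q 0‖) := by
      rw [div_lt_iff₀ hpos] at hm
      linarith
    nlinarith [this, h2, hm1, hpos]
  have hc1 : c = 1 := by
    ext x
    rw [translation_apply hclin x, ← hu, huz]
    simp
  rw [hpq, hc1, one_mul]
end EuclidCore

set_option linter.unusedSectionVars false

section UnitaryUtils
variable {V : Type} [NormedAddCommGroup V] [InnerProductSpace ℂ V]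

/-- coercion of isometry equivs to endomorphisms, as a monoid hom -/
def toEndHom : (V ≃ₗᵢ[ℂ] V) →* (V →ₗ[ℂ] V) where
  toFun f := (f : V →ₗ[ℂ] V)
  map_one' := by ext x; rfl
  map_mul' f g := by ext x; rfl

lemma toEndHom_inj {f g : V ≃ₗᵢ[ℂ] V} (h : toEndHom f = toEndHom g) : f = g := by
  ext x
  have := congrFun (congrArg (fun (m : V →ₗ[ℂ] V) => (m : V → V)) h) x
  exact this

lemma toEndHom_apply (f : V ≃ₗᵢ[ℂ] V) (x : V) : toEndHom f x = f x := rfl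

/-- restriction of an isometry to an invariant subspace -/
def restrIso (f : V ≃ₗᵢ[ℂ] V) (W : Submodule ℂ V) (h1 : ∀ x ∈ W, f x ∈ W)
    (h2 : ∀ x ∈ W, f.symm x ∈ W) : (↥W ≃ₗᵢ[ℂ] ↥W) where
  toLinearEquiv :=
    { toFun := fun x => ⟨f x, h1 x x.2⟩
      map_add' := fun x y => Subtype.ext (by simp)
      map_smul' := fun c x => Subtype.ext (by simp)
      invFun := fun x => ⟨f.symm x, h2 x x.2⟩
      left_inv := fun x => Subtype.ext (by simp)
      right_inv := fun x => Subtype.ext (by simp) }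
  norm_map' := fun x => by
    have h3 : ‖(⟨f x, h1 x x.2⟩ : ↥W)‖ = ‖f (x : V)‖ := rfl
    have h4 : ‖x‖ = ‖(x : V)‖ := rfl
    exact h3.trans ((f.norm_map (x : V)).trans h4.symm)

lemma restrIso_apply (f : V ≃ₗᵢ[ℂ] V) (W : Submodule ℂ V) (h1 : ∀ x ∈ W, f x ∈ W)
    (h2 : ∀ x ∈ W, f.symm x ∈ W) (x : ↥W) : ((restrIso f W h1 h2 x : ↥W) : V) = f x := rfl

end UnitaryUtils

set_option linter.unusedSectionVars false
set_option maxHeartbeats 1000000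

section UnitaryUtils2
variable {V : Type} [NormedAddCommGroup V] [InnerProductSpace ℂ V]
variable {G : Type} [Group G]

/-- restriction of a unitary rep to an invariant subspace -/
noncomputable def restrHom (ρ : G →* (V ≃ₗᵢ[ℂ] V)) (W : Submodule ℂ V)
    (hinv : ∀ g : G, ∀ x ∈ W, ρ g x ∈ W) : G →* (↥W ≃ₗᵢ[ℂ] ↥W) where
  toFun g := restrIso (ρ g) W (hinv g) (fun x hx => by
    have h1 : (ρ g).symm x = ρ g⁻¹ x := by
      rw [map_inv]
      rfl
    rw [h1]
    exact hinv g⁻¹ x hx)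
  map_one' := by
    apply LinearIsometryEquiv.ext
    intro x
    apply Subtype.ext
    show (ρ 1) (x : V) = (x : V)
    rw [map_one]
    rfl
  map_mul' g h := by
    apply LinearIsometryEquiv.ext
    intro x
    apply Subtype.ext
    show (ρ (g * h)) (x : V) = ρ g (ρ h (x : V))
    rw [map_mul]
    rfl

lemma restrHom_apply (ρ : G →* (V ≃ₗᵢ[ℂ] V)) (W : Submodule ℂ V)
    (hinv : ∀ g : G, ∀ x ∈ W, ρ g x ∈ W) (g : G) (x : ↥W) :
    ((restrHom ρ W hinv g x : ↥W) : V) = ρ g (x : V) := rfl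

lemma restr_comm_pointwise (ρ : G →* (V ≃ₗᵢ[ℂ] V)) (W : Submodule ℂ V)
    (hinv : ∀ g : G, ∀ x ∈ W, ρ g x ∈ W) (a b : G)
    (h : restrHom ρ W hinv a * restrHom ρ W hinv b
       = restrHom ρ W hinv b * restrHom ρ W hinv a) :
    ∀ v ∈ W, ρ a (ρ b v) = ρ b (ρ a v) := by
  intro v hv
  have h2 := congrArg (fun (m : ↥W ≃ₗᵢ[ℂ] ↥W) => ((m ⟨v, hv⟩ : ↥W) : V)) h
  simpa only [LinearIsometryEquiv.coe_mul, Function.comp_apply,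
    restrHom_apply] using h2

lemma commute_of_parts [FiniteDimensional ℂ V] {f g : V ≃ₗᵢ[ℂ] V} (W : Submodule ℂ V)
    (h1 : ∀ v ∈ W, f (g v) = g (f v)) (h2 : ∀ v ∈ Wᗮ, f (g v) = g (f v)) :
    f * g = g * f := by
  apply LinearIsometryEquiv.ext
  intro x
  obtain ⟨y, hy, z, hz, rfl⟩ := W.exists_add_mem_mem_orthogonal x
  show f (g (y + z)) = g (f (y + z))
  rw [map_add, map_add, map_add, map_add, h1 y hy, h2 z hz]

end UnitaryUtils2

section KeyT

open Module

theorem keyT (N : ℕ) :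
    ∀ (V : Type) [inst1 : NormedAddCommGroup V] [inst2 : InnerProductSpace ℂ V]
      [inst3 : FiniteDimensional ℂ V], Module.finrank ℂ V ≤ N →
    ∀ (c : ℕ) (G : Type) [inst4 : Group G] (ρ : G →* (V ≃ₗᵢ[ℂ] V)),
      (∀ x ∈ Subgroup.lowerCentralSeries (⊤ : Subgroup G) c, ρ x = 1) →
      ∃ A : Subgroup G, A.FiniteIndex ∧ ∀ a ∈ A, ∀ b ∈ A, ρ a * ρ b = ρ b * ρ a := by
  induction N with
  | zero =>
    intro V _ _ _ hrank c G _ ρ _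
    haveI hss : Subsingleton V := by
      have h0 : Module.finrank ℂ V = 0 := Nat.le_zero.mp hrank
      exact Module.finrank_zero_iff.mp h0
    refine ⟨⊤, inferInstance, fun a _ b _ => ?_⟩
    apply LinearIsometryEquiv.ext
    intro x
    exact Subsingleton.elim _ _
  | succ N ihN =>
    intro V i1 i2 i3 hrank c
    induction c with
    | zero =>
      intro G _ ρ h
      refine ⟨⊤, inferInstance, fun a _ b _ => ?_⟩
      rw [h a (by rw [lowerCentralSeries_zero]; exact Subgroup.mem_top a),
        h b (by rw [lowerCentralSeries_zero]; exact Subgroup.mem_top b)]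
    | succ c ihc =>
      intro G iG ρ hc1
      by_cases hV0 : Module.finrank ℂ V = 0
      · haveI hss : Subsingleton V := Module.finrank_zero_iff.mp hV0
        refine ⟨⊤, inferInstance, fun a _ b _ => ?_⟩
        apply LinearIsometryEquiv.ext
        intro x
        exact Subsingleton.elim _ _
      have hn0pos : 0 < Module.finrank ℂ V := Nat.pos_of_ne_zero hV0
      haveI hVnt : Nontrivial V := Module.nontrivial_of_finrank_pos hn0pos
      cases c with
      | zero =>
        refine ⟨⊤, inferInstance, fun a _ b _ => ?_⟩
        have h1 : ⁅a, b⁆ ∈ Subgroup.lowerCentralSeries (⊤ : Subgroup G) 1 := by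
          rw [lowerCentralSeries_one, commutator_def]
          exact Subgroup.commutator_mem_commutator (Subgroup.mem_top a) (Subgroup.mem_top b)
        have h2 := hc1 _ h1
        rw [map_commutatorElement] at h2
        exact (commutatorElement_eq_one_iff_commute.mp h2).eq
      | succ c0 =>
        -- main case: hc1 kills γ (c0+2)
        set n0 := Module.finrank ℂ V with hn0
        have hZcomm : ∀ z ∈ Subgroup.lowerCentralSeries (⊤ : Subgroup G) (c0+1), ∀ g : G,
            ρ z * ρ g = ρ g * ρ z := by
          intro z hz g
          have h1 : ⁅z, g⁆ ∈ Subgroup.lowerCentralSeries (⊤ : Subgroup G) (c0+2) := by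
            rw [lowerCentralSeries_succ]
            exact Subgroup.commutator_mem_commutator hz (Subgroup.mem_top g)
          have h2 := hc1 _ h1
          rw [map_commutatorElement] at h2
          exact (commutatorElement_eq_one_iff_commute.mp h2).eq
        by_cases hsc : ∀ z ∈ Subgroup.lowerCentralSeries (⊤ : Subgroup G) (c0+1), ∃ μ : ℂ,
            toEndHom (ρ z) = μ • (LinearMap.id : V →ₗ[ℂ] V)
        · -- CASE B : central quotient acts by scalars
          set F : G →* (V →ₗ[ℂ] V) := toEndHom.comp ρ with hF
          have hFinv : ∀ g : G, F g⁻¹ * F g = 1 := by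
            intro g
            rw [← map_mul, inv_mul_cancel, map_one]
          have hFinv' : ∀ g : G, F g * F g⁻¹ = 1 := by
            intro g
            rw [← map_mul, mul_inv_cancel, map_one]
          have hpair : ∀ (g u : G), u ∈ Subgroup.lowerCentralSeries (⊤ : Subgroup G) c0 →
              ∃ μ : ℂ, μ ^ n0 = 1 ∧ F g * F u * F g⁻¹ = μ • F u := by
            intro g u hu
            have hmem : ⁅g, u⁆ ∈ Subgroup.lowerCentralSeries (⊤ : Subgroup G) (c0+1) := by
              have h1 : ⁅u, g⁆ ∈ Subgroup.lowerCentralSeries (⊤ : Subgroup G) (c0+1) := by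
                rw [lowerCentralSeries_succ]
                exact Subgroup.commutator_mem_commutator hu (Subgroup.mem_top g)
              have h2 := (Subgroup.lowerCentralSeries (⊤ : Subgroup G) (c0+1)).inv_mem h1
              rwa [commutatorElement_inv] at h2
            obtain ⟨μ, hμ⟩ := hsc _ hmem
            have e1 : F g * F u * F g⁻¹ * F u⁻¹ = μ • LinearMap.id := by
              have : F ⁅g, u⁆ = F g * F u * F g⁻¹ * F u⁻¹ := by
                show F (g * u * g⁻¹ * u⁻¹) = _
                rw [map_mul, map_mul, map_mul]
              rw [← this, hF]
              exact hμ
            have e2 : F g * F u * F g⁻¹ = μ • F u := by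
              calc F g * F u * F g⁻¹
                  = F g * F u * F g⁻¹ * (F u⁻¹ * F u) := by rw [hFinv, mul_one]
                _ = (F g * F u * F g⁻¹ * F u⁻¹) * F u := by
                    simp only [mul_assoc]
                _ = (μ • LinearMap.id) * F u := by rw [e1]
                _ = (μ • (1 : V →ₗ[ℂ] V)) * F u := rfl
                _ = μ • F u := by rw [smul_mul_assoc, one_mul]
            have hdu : LinearMap.det (F u) ≠ 0 := by
              intro h0
              have h1 := congrArg LinearMap.det (hFinv' u)
              rw [map_mul, h0, zero_mul, map_one] at h1
              exact zero_ne_one h1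
            have hdet : μ ^ n0 = 1 := by
              have hd1 : LinearMap.det (F g * F u * F g⁻¹) = LinearMap.det (F u) := by
                rw [map_mul, map_mul]
                have h2 : LinearMap.det (F g) * LinearMap.det (F g⁻¹) = 1 := by
                  rw [← map_mul, hFinv', map_one]
                calc LinearMap.det (F g) * LinearMap.det (F u) * LinearMap.det (F g⁻¹)
                    = LinearMap.det (F g) * LinearMap.det (F g⁻¹) * LinearMap.det (F u) := by ring
                  _ = LinearMap.det (F u) := by rw [h2, one_mul]
              have hd2 : LinearMap.det (μ • F u) = μ ^ n0 * LinearMap.det (F u) := by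
                rw [LinearMap.det_smul]
              rw [e2, hd2] at hd1
              exact mul_right_cancel₀ hdu (by rw [hd1, one_mul])
            exact ⟨μ, hdet, e2⟩
          have hne0 : ∀ u : G, F u ≠ 0 := by
            intro u h0
            obtain ⟨x, hx⟩ := exists_ne (0 : V)
            have h1 : ρ u x = 0 := by
              have : F u x = 0 := by rw [h0]; rfl
              exact this
            have h2 : ‖ρ u x‖ = ‖x‖ := (ρ u).norm_map x
            rw [h1, norm_zero] at h2
            exact hx (norm_eq_zero.mp h2.symm)
          set Sset : Set (V →ₗ[ℂ] V) :=
            (fun u => F u) '' ((Subgroup.lowerCentralSeries (⊤ : Subgroup G) c0 : Subgroup G) : Set G) with hSset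
          obtain ⟨tset, htsub, htspan, htind⟩ := exists_linearIndependent ℂ Sset
          have htfin : tset.Finite := htind.setFinite
          haveI : Fintype ↥tset := htfin.fintype
          have hlam : ∀ (g : G) (e : ↥tset), ∃ μ : ℂ, μ ^ n0 = 1 ∧
              F g * (e : V →ₗ[ℂ] V) * F g⁻¹ = μ • (e : V →ₗ[ℂ] V) := by
            intro g e
            obtain ⟨u, hu, hue⟩ := htsub e.2
            obtain ⟨μ, h1, h2⟩ := hpair g u hu
            refine ⟨μ, h1, ?_⟩
            rw [← hue]
            exact h2
          have hene : ∀ e : ↥tset, (e : V →ₗ[ℂ] V) ≠ 0 := by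
            intro e
            obtain ⟨u, hu, hue⟩ := htsub e.2
            rw [← hue]
            exact hne0 u
          set lam : G → ↥tset → ℂ := fun g e => Classical.choose (hlam g e) with hlamdef
          have hlamspec : ∀ g e, (lam g e) ^ n0 = 1 ∧
              F g * (e : V →ₗ[ℂ] V) * F g⁻¹ = lam g e • (e : V →ₗ[ℂ] V) :=
            fun g e => Classical.choose_spec (hlam g e)
          have hlamuniq : ∀ (g : G) (e : ↥tset) (μ : ℂ),
              (F g * (e : V →ₗ[ℂ] V) * F g⁻¹ = μ • (e : V →ₗ[ℂ] V)) → lam g e = μ := by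
            intro g e μ h
            have h2 := (hlamspec g e).2
            exact smul_left_injective ℂ (hene e) (h2.symm.trans h)
          have hlamne : ∀ g e, lam g e ≠ 0 := by
            intro g e h0
            have h1 := (hlamspec g e).1
            rw [h0, zero_pow (Nat.pos_of_ne_zero hV0).ne'] at h1
            exact zero_ne_one h1
          have hlammul : ∀ (g h : G) (e : ↥tset), lam (g * h) e = lam g e * lam h e := by
            intro g h e
            apply hlamuniq
            have k1 := (hlamspec h e).2
            have k2 := (hlamspec g e).2
            calc F (g * h) * (e : V →ₗ[ℂ] V) * F ((g * h)⁻¹)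
                = F g * (F h * (e : V →ₗ[ℂ] V) * F h⁻¹) * F g⁻¹ := by
                  rw [mul_inv_rev, map_mul, map_mul]
                  simp only [mul_assoc]
              _ = F g * (lam h e • (e : V →ₗ[ℂ] V)) * F g⁻¹ := by rw [k1]
              _ = lam h e • (F g * (e : V →ₗ[ℂ] V) * F g⁻¹) := by
                  rw [mul_smul_comm, smul_mul_assoc]
              _ = lam h e • (lam g e • (e : V →ₗ[ℂ] V)) := by rw [k2]
              _ = (lam g e * lam h e) • (e : V →ₗ[ℂ] V) := by
                  rw [smul_smul, mul_comm]
          -- the pairing homomorphism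
          set Φ : G →* (↥tset → rootsOfUnity n0 ℂ) :=
            MonoidHom.mk' (fun g e => ⟨Units.mk0 (lam g e) (hlamne g e), by
              rw [mem_rootsOfUnity]
              apply Units.ext
              rw [Units.val_pow_eq_pow_val]
              exact (hlamspec g e).1⟩)
              (fun g h => funext fun e => Subtype.ext (Units.ext (hlammul g h e))) with hΦ
          -- the centralizer subgroup
          set A : Subgroup G := Subgroup.comap ρ
            (Subgroup.centralizer
              ((fun u => ρ u) '' ((Subgroup.lowerCentralSeries (⊤ : Subgroup G) c0 : Subgroup G) : Set G))) with hA
          have hAmem : ∀ w : G, w ∈ A ↔ ρ w ∈ Subgroup.centralizer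
              ((fun u => ρ u) '' ((Subgroup.lowerCentralSeries (⊤ : Subgroup G) c0 : Subgroup G) : Set G)) := by
            intro w
            rw [hA]
            exact Subgroup.mem_comap
          have hkerA : Φ.ker ≤ A := by
            intro g hg
            rw [MonoidHom.mem_ker] at hg
            have hfix : ∀ e : ↥tset, F g * (e : V →ₗ[ℂ] V) * F g⁻¹ = (e : V →ₗ[ℂ] V) := by
              intro e
              have h1 : lam g e = 1 := by
                have h2 := congrFun hg e
                have h3 : lam g e = (((Φ g e : ℂˣ)) : ℂ) := rfl
                rw [h3, h2]
                rfl
              rw [(hlamspec g e).2, h1, one_smul]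
            have hfixspan : ∀ m ∈ Submodule.span ℂ Sset, F g * m * F g⁻¹ = m := by
              intro m hm
              rw [← htspan] at hm
              set L : (V →ₗ[ℂ] V) →ₗ[ℂ] (V →ₗ[ℂ] V) :=
                (LinearMap.mulRight ℂ (F g⁻¹)).comp (LinearMap.mulLeft ℂ (F g)) with hL
              have hLe : Set.EqOn ⇑L ⇑(LinearMap.id (R := ℂ) (M := V →ₗ[ℂ] V)) tset := by
                intro e he
                exact hfix ⟨e, he⟩
              exact LinearMap.eqOn_span hLe hm
            rw [hAmem, Subgroup.mem_centralizer_iff]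
            intro h hh
            obtain ⟨u, hu, rfl⟩ := hh
            apply toEndHom_inj
            rw [map_mul, map_mul]
            have hmemS : F u ∈ Submodule.span ℂ Sset :=
              Submodule.subset_span ⟨u, hu, rfl⟩
            have h5 := hfixspan _ hmemS
            show F u * F g = F g * F u
            calc F u * F g = (F g * F u * F g⁻¹) * F g := by rw [h5]
              _ = F g * (F u * (F g⁻¹ * F g)) := by simp only [mul_assoc]
              _ = F g * F u := by rw [hFinv, mul_one]
          haveI : NeZero n0 := ⟨hV0⟩
          haveI hfinc : Finite (↥tset → rootsOfUnity n0 ℂ) := by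
            infer_instance
          haveI hfq : Finite (G ⧸ Φ.ker) := by
            have e := QuotientGroup.quotientKerEquivRange Φ
            exact Finite.of_equiv _ e.symm.toEquiv
          haveI hkerfi : Φ.ker.FiniteIndex := Subgroup.finiteIndex_of_finite_quotient
          have hAfin : A.FiniteIndex := by
            have hdvd := Subgroup.index_dvd_of_le hkerA
            exact ⟨fun h0 => hkerfi.index_ne_zero (zero_dvd_iff.mp (h0 ▸ hdvd))⟩
          -- recurse on class
          have hmap : (Subgroup.lowerCentralSeries (⊤ : Subgroup ↥A) (c0+1)).map (ρ.comp A.subtype) = ⊥ := by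
            have hstep : Subgroup.lowerCentralSeries (⊤ : Subgroup ↥A) (c0+1)
                = ⁅lowerCentralSeries (⊤ : Subgroup ↥A) c0, (⊤ : Subgroup ↥A)⁆ := rfl
            rw [hstep, Subgroup.map_commutator,
              Subgroup.commutator_eq_bot_iff_le_centralizer]
            intro x hx
            rw [Subgroup.mem_centralizer_iff]
            intro y hy
            obtain ⟨x', hx', rfl⟩ := hx
            obtain ⟨y', _, rfl⟩ := hy
            have hxG : (A.subtype x') ∈ Subgroup.lowerCentralSeries (⊤ : Subgroup G) c0 :=
              lowerCentralSeries_map_subtype_le A c0 ⟨x', hx', rfl⟩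
            have hyA := (hAmem _).mp y'.2
            rw [Subgroup.mem_centralizer_iff] at hyA
            have h6 := hyA (ρ (A.subtype x')) ⟨A.subtype x', hxG, rfl⟩
            exact h6.symm
          have hA1 : ∀ x ∈ Subgroup.lowerCentralSeries (⊤ : Subgroup ↥A) (c0+1), (ρ.comp A.subtype) x = 1 := by
            intro x hx
            have h7 : (ρ.comp A.subtype) x ∈
                (Subgroup.lowerCentralSeries (⊤ : Subgroup ↥A) (c0+1)).map (ρ.comp A.subtype) := ⟨x, hx, rfl⟩
            rw [hmap] at h7
            exact Subgroup.mem_bot.mp h7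
          obtain ⟨B, hBf, hBc⟩ := ihc ↥A (ρ.comp A.subtype) hA1
          refine ⟨B.map A.subtype, ?_, ?_⟩
          · have hle : B.map A.subtype ≤ A := by
              intro x hx
              obtain ⟨y, _, rfl⟩ := hx
              exact y.2
            have hrel := Subgroup.relIndex_mul_index hle
            have hrei : (B.map A.subtype).relIndex A = B.index := by
              have h8 : (B.map A.subtype).subgroupOf A = B :=
                Subgroup.comap_map_eq_self_of_injective A.subtype_injective B
              rw [Subgroup.relIndex, h8]
            refine ⟨?_⟩
            rw [← hrel, hrei]
            exact Nat.mul_ne_zero hBf.index_ne_zero hAfin.index_ne_zero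
          · intro a ha b hb
            obtain ⟨a', ha', rfl⟩ := ha
            obtain ⟨b', hb', rfl⟩ := hb
            exact hBc a' ha' b' hb'
        · -- CASE A : some central element acts non-scalar; split space
          push_neg at hsc
          obtain ⟨z, hz, hznot⟩ := hsc
          set T : V →ₗ[ℂ] V := toEndHom (ρ z) with hT
          obtain ⟨μ, hμ⟩ := Module.End.exists_eigenvalue T
          set W := Module.End.eigenspace T μ with hW
          have hWbot : W ≠ ⊥ := hμ
          have hWtop : W ≠ ⊤ := by
            intro htop
            apply hznot μ
            apply LinearMap.ext
            intro x
            have hx : x ∈ W := htop ▸ Submodule.mem_top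
            have h1 := Module.End.mem_eigenspace_iff.mp hx
            simpa using h1
          have hcommpt : ∀ (g : G) (x : V), ρ z (ρ g x) = ρ g (ρ z x) := by
            intro g x
            have hcomm := hZcomm z hz g
            have := congrArg (fun (m : V ≃ₗᵢ[ℂ] V) => m x) hcomm
            simpa [LinearIsometryEquiv.coe_mul, Function.comp_apply] using this
          have hinvW : ∀ g : G, ∀ x ∈ W, ρ g x ∈ W := by
            intro g x hx
            rw [Module.End.mem_eigenspace_iff] at hx ⊢
            have h4 : T (ρ g x) = ρ z (ρ g x) := rfl
            have h5 : T x = ρ z x := rfl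
            rw [h4, hcommpt g x, ← h5, hx, map_smul]
          have hinvWp : ∀ g : G, ∀ x ∈ Wᗮ, ρ g x ∈ Wᗮ := by
            intro g x hx
            rw [Submodule.mem_orthogonal] at hx ⊢
            intro u hu
            have h6 : (ρ g) ((ρ g).symm u) = u := (ρ g).apply_symm_apply u
            have h7 : (ρ g).symm u ∈ W := by
              have h8 : (ρ g).symm u = ρ g⁻¹ u := by rw [map_inv]; rfl
              rw [h8]
              exact hinvW g⁻¹ u hu
            calc inner ℂ u (ρ g x)
                = (inner ℂ (ρ g ((ρ g).symm u)) (ρ g x) : ℂ) := by rw [h6]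
              _ = inner ℂ ((ρ g).symm u) x := (ρ g).inner_map_map _ _
              _ = 0 := hx _ h7
          have hfr1 : Module.finrank ℂ ↥W ≤ N := by
            have h9 := Submodule.finrank_lt (K := ℂ) (V := V) hWtop
            omega
          have hfr2 : Module.finrank ℂ ↥Wᗮ ≤ N := by
            have hsum := Submodule.finrank_add_finrank_orthogonal (K := W)
            have hne : Module.finrank ℂ ↥W ≠ 0 := by
              intro h0
              exact hWbot (Submodule.finrank_eq_zero.mp h0)
            omega
          have h1k : ∀ x ∈ Subgroup.lowerCentralSeries (⊤ : Subgroup G) (c0+2), restrHom ρ W hinvW x = 1 := by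
            intro x hx
            apply LinearIsometryEquiv.ext
            intro w
            apply Subtype.ext
            show ρ x (w : V) = (w : V)
            rw [hc1 x hx]
            rfl
          have h2k : ∀ x ∈ Subgroup.lowerCentralSeries (⊤ : Subgroup G) (c0+2), restrHom ρ Wᗮ hinvWp x = 1 := by
            intro x hx
            apply LinearIsometryEquiv.ext
            intro w
            apply Subtype.ext
            show ρ x (w : V) = (w : V)
            rw [hc1 x hx]
            rfl
          obtain ⟨A₁, hA₁f, hA₁c⟩ := ihN ↥W hfr1 (c0+2) G (restrHom ρ W hinvW) h1k
          obtain ⟨A₂, hA₂f, hA₂c⟩ := ihN ↥Wᗮ hfr2 (c0+2) G (restrHom ρ Wᗮ hinvWp) h2k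
          haveI := hA₁f
          haveI := hA₂f
          refine ⟨A₁ ⊓ A₂, inferInstance, ?_⟩
          intro a ha b hb
          apply commute_of_parts W
          · exact restr_comm_pointwise ρ W hinvW a b (hA₁c a ha.1 b hb.1)
          · exact restr_comm_pointwise ρ Wᗮ hinvWp a b (hA₂c a ha.2 b hb.2)

end KeyT

section Cplx
variable {k : ℕ}

/-- real and imaginary parts of a complex Euclidean vector -/
def reV (x : EuclideanSpace ℂ (Fin k)) : EuclideanSpace ℝ (Fin k) := WithLp.toLp 2 (fun j => (x j).re)
def imV (x : EuclideanSpace ℂ (Fin k)) : EuclideanSpace ℝ (Fin k) := WithLp.toLp 2 (fun j => (x j).im)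

lemma reV_add (x y : EuclideanSpace ℂ (Fin k)) : reV (x + y) = reV x + reV y := by
  ext j
  simp [reV, PiLp.add_apply]

lemma imV_add (x y : EuclideanSpace ℂ (Fin k)) : imV (x + y) = imV x + imV y := by
  ext j
  simp [imV, PiLp.add_apply]

lemma reV_smul (a : ℂ) (x : EuclideanSpace ℂ (Fin k)) :
    reV (a • x) = a.re • reV x - a.im • imV x := by
  ext j
  simp [reV, imV, PiLp.smul_apply, PiLp.sub_apply, Complex.mul_re]

lemma imV_smul (a : ℂ) (x : EuclideanSpace ℂ (Fin k)) :
    imV (a • x) = a.re • imV x + a.im • reV x := by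
  ext j
  simp [reV, imV, PiLp.smul_apply, PiLp.add_apply, Complex.mul_im]

/-- the complexified map -/
noncomputable def CFun (t : EuclideanSpace ℝ (Fin k) ≃ₗᵢ[ℝ] EuclideanSpace ℝ (Fin k))
    (x : EuclideanSpace ℂ (Fin k)) : EuclideanSpace ℂ (Fin k) :=
  WithLp.toLp 2 (fun i => (t (reV x) i : ℝ) + (t (imV x) i : ℝ) * Complex.I)

lemma CFun_apply (t : EuclideanSpace ℝ (Fin k) ≃ₗᵢ[ℝ] EuclideanSpace ℝ (Fin k))
    (x : EuclideanSpace ℂ (Fin k)) (i : Fin k) :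
    CFun t x i = (t (reV x) i : ℝ) + (t (imV x) i : ℝ) * Complex.I := rfl

lemma CFun_re (t : EuclideanSpace ℝ (Fin k) ≃ₗᵢ[ℝ] EuclideanSpace ℝ (Fin k))
    (x : EuclideanSpace ℂ (Fin k)) (i : Fin k) : (CFun t x i).re = t (reV x) i := by
  simp [CFun_apply]

lemma CFun_im (t : EuclideanSpace ℝ (Fin k) ≃ₗᵢ[ℝ] EuclideanSpace ℝ (Fin k))
    (x : EuclideanSpace ℂ (Fin k)) (i : Fin k) : (CFun t x i).im = t (imV x) i := by
  simp [CFun_apply]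

lemma reV_CFun (t : EuclideanSpace ℝ (Fin k) ≃ₗᵢ[ℝ] EuclideanSpace ℝ (Fin k))
    (x : EuclideanSpace ℂ (Fin k)) : reV (CFun t x) = t (reV x) := by
  ext j
  simp [reV, CFun_re]

lemma imV_CFun (t : EuclideanSpace ℝ (Fin k) ≃ₗᵢ[ℝ] EuclideanSpace ℝ (Fin k))
    (x : EuclideanSpace ℂ (Fin k)) : imV (CFun t x) = t (imV x) := by
  ext j
  simp [imV, CFun_im]

lemma sumsq_eq (t : EuclideanSpace ℝ (Fin k) ≃ₗᵢ[ℝ] EuclideanSpace ℝ (Fin k))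
    (v : EuclideanSpace ℝ (Fin k)) :
    ∑ i : Fin k, (t v i) ^ 2 = ∑ i : Fin k, (v i) ^ 2 := by
  have h1 := t.norm_map v
  rw [EuclideanSpace.norm_eq, EuclideanSpace.norm_eq] at h1
  have h2 : ∀ w : EuclideanSpace ℝ (Fin k), ∑ i, ‖w i‖ ^ 2 = ∑ i, (w i) ^ 2 := by
    intro w
    congr 1
    ext i
    rw [Real.norm_eq_abs, sq_abs]
  rw [h2, h2] at h1
  have h3 : (0:ℝ) ≤ ∑ i : Fin k, (t v i) ^ 2 := Finset.sum_nonneg fun i _ => sq_nonneg _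
  have h4 : (0:ℝ) ≤ ∑ i : Fin k, (v i) ^ 2 := Finset.sum_nonneg fun i _ => sq_nonneg _
  exact (Real.sqrt_inj h3 h4).mp h1

/-- complexification of a real linear isometry of Euclidean space -/
noncomputable def cplxIso (t : EuclideanSpace ℝ (Fin k) ≃ₗᵢ[ℝ] EuclideanSpace ℝ (Fin k)) :
    EuclideanSpace ℂ (Fin k) ≃ₗᵢ[ℂ] EuclideanSpace ℂ (Fin k) where
  toLinearEquiv :=
    { toFun := CFun t
      invFun := CFun t.symm
      map_add' := fun x y => by
        ext i
        rw [PiLp.add_apply, CFun_apply, CFun_apply, CFun_apply, reV_add, imV_add,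
          map_add, map_add]
        rw [PiLp.add_apply, PiLp.add_apply]
        push_cast
        ring
      map_smul' := fun a x => by
        ext i
        show CFun t (a • x) i = (a • CFun t x) i
        rw [CFun_apply, reV_smul, imV_smul, map_sub, map_add, map_smul,
          map_smul, map_smul, map_smul]
        simp only [PiLp.smul_apply, PiLp.sub_apply, PiLp.add_apply, CFun_apply,
          smul_eq_mul]
        apply Complex.ext
        · simp [Complex.mul_re]
          try ring
        · simp [Complex.mul_im]
          try ring
      left_inv := fun x => by
        ext i
        show CFun t.symm (CFun t x) i = x i
        rw [CFun_apply, reV_CFun, imV_CFun, t.symm_apply_apply, t.symm_apply_apply]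
        apply Complex.ext
        · simp [reV]
        · simp [imV]
      right_inv := fun x => by
        ext i
        show CFun t (CFun t.symm x) i = x i
        rw [CFun_apply, reV_CFun, imV_CFun, t.apply_symm_apply, t.apply_symm_apply]
        apply Complex.ext
        · simp [reV]
        · simp [imV] }
  norm_map' := fun x => by
    show ‖CFun t x‖ = ‖x‖
    rw [EuclideanSpace.norm_eq, EuclideanSpace.norm_eq]
    congr 1
    have h1 : ∀ i : Fin k, ‖CFun t x i‖ ^ 2 = (t (reV x) i) ^ 2 + (t (imV x) i) ^ 2 := by
      intro i
      rw [Complex.sq_norm, Complex.normSq_apply, CFun_re, CFun_im]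
      ring
    have h2 : ∀ i : Fin k, ‖x i‖ ^ 2 = (reV x i) ^ 2 + (imV x i) ^ 2 := by
      intro i
      rw [Complex.sq_norm, Complex.normSq_apply]
      simp [reV, imV]
      ring
    calc ∑ i, ‖CFun t x i‖ ^ 2
        = ∑ i : Fin k, ((t (reV x) i) ^ 2 + (t (imV x) i) ^ 2) := by
          congr 1; funext i; rw [h1]
      _ = ∑ i : Fin k, (t (reV x) i) ^ 2 + ∑ i : Fin k, (t (imV x) i) ^ 2 :=
          Finset.sum_add_distrib
      _ = ∑ i : Fin k, (reV x i) ^ 2 + ∑ i : Fin k, (imV x i) ^ 2 := by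
          rw [sumsq_eq, sumsq_eq]
      _ = ∑ i : Fin k, ((reV x i) ^ 2 + (imV x i) ^ 2) := Finset.sum_add_distrib.symm
      _ = ∑ i, ‖x i‖ ^ 2 := by congr 1; funext i; rw [h2]

lemma cplxIso_apply (t : EuclideanSpace ℝ (Fin k) ≃ₗᵢ[ℝ] EuclideanSpace ℝ (Fin k))
    (x : EuclideanSpace ℂ (Fin k)) : cplxIso t x = CFun t x := rfl

/-- complexification as a group hom -/
noncomputable def cplxHom : (EuclideanSpace ℝ (Fin k) ≃ₗᵢ[ℝ] EuclideanSpace ℝ (Fin k)) →*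
    (EuclideanSpace ℂ (Fin k) ≃ₗᵢ[ℂ] EuclideanSpace ℂ (Fin k)) where
  toFun := cplxIso
  map_one' := by
    apply LinearIsometryEquiv.ext
    intro x
    rw [cplxIso_apply]
    ext i
    rw [CFun_apply]
    show ((reV x i : ℝ) : ℂ) + (imV x i : ℝ) * Complex.I = x i
    apply Complex.ext
    · simp [reV]
    · simp [imV]
  map_mul' t s := by
    apply LinearIsometryEquiv.ext
    intro x
    show CFun (t * s) x = CFun t (CFun s x)
    ext i
    rw [CFun_apply, CFun_apply, reV_CFun, imV_CFun]
    rfl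

lemma cplxHom_inj : Function.Injective (cplxHom (k := k)) := by
  intro t s h
  apply LinearIsometryEquiv.ext
  intro v
  set x : EuclideanSpace ℂ (Fin k) := WithLp.toLp 2 (fun j => ((v j : ℝ) : ℂ)) with hx
  have hre : reV x = v := by
    ext j
    simp [reV, hx]
  have h1 : CFun t x = CFun s x := congrArg (fun (m : EuclideanSpace ℂ (Fin k) ≃ₗᵢ[ℂ]
    EuclideanSpace ℂ (Fin k)) => m x) h
  ext j
  have h2 := congrArg Complex.re (congrFun (congrArg WithLp.ofLp h1) j)
  rw [CFun_re, CFun_re, hre] at h2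
  exact h2

end Cplx

/-- Every nilpotent subgroup of `Isom(ℝᵏ)` is virtually abelian: it contains an abelian
subgroup of finite index. -/
theorem stmt_5 (k : ℕ)
    (Γ : Subgroup (EuclideanSpace ℝ (Fin k) ≃ᵢ EuclideanSpace ℝ (Fin k)))
    (hΓ : Group.IsNilpotent Γ) :
    ∃ A : Subgroup Γ, A.FiniteIndex ∧ ∀ a ∈ A, ∀ b ∈ A, a * b = b * a := by
  haveI := hΓ
  set ρ : ↥Γ →* (EuclideanSpace ℂ (Fin k) ≃ₗᵢ[ℂ] EuclideanSpace ℂ (Fin k)) :=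
    cplxHom.comp (linHom.comp Γ.subtype) with hρ
  obtain ⟨n, hn⟩ := nilpotent_iff_lowerCentralSeries.mp hΓ
  have hyp : ∀ x ∈ Subgroup.lowerCentralSeries (⊤ : Subgroup ↥Γ) n, ρ x = 1 := by
    intro x hx
    rw [hn] at hx
    rw [Subgroup.mem_bot.mp hx]
    exact map_one ρ
  have hrank : Module.finrank ℂ (EuclideanSpace ℂ (Fin k)) ≤ k := le_of_eq (by
    simpa using finrank_euclideanSpace (𝕜 := ℂ) (n := Fin k))
  obtain ⟨A, hAf, hAc⟩ := keyT k (EuclideanSpace ℂ (Fin k)) hrank n ↥Γ ρ hyp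
  refine ⟨A, hAf, ?_⟩
  intro a ha b hb
  -- pass to the image subgroup in the full isometry group
  set K := A.map Γ.subtype with hK
  have hnilK : Group.IsNilpotent ↥K := by
    haveI : Group.IsNilpotent ↥A := Subgroup.isNilpotent A
    exact nilpotent_of_surjective
      (Subgroup.equivMapOfInjective A Γ.subtype Γ.subtype_injective).toMonoidHom
      (MulEquiv.surjective _)
  have hlinK : ∀ p ∈ K, ∀ q ∈ K, linHom p * linHom q = linHom q * linHom p := by
    intro p hp q hq
    rw [hK] at hp hq
    obtain ⟨p', hp', rfl⟩ := hp
    obtain ⟨q', hq', rfl⟩ := hq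
    have h1 := hAc p' hp' q' hq'
    apply cplxHom_inj
    rw [map_mul, map_mul]
    exact h1
  have hcore := euclid_core K hnilK hlinK
  have hmema : (Γ.subtype a) ∈ K := ⟨a, ha, rfl⟩
  have hmemb : (Γ.subtype b) ∈ K := ⟨b, hb, rfl⟩
  have h2 := hcore _ hmema _ hmemb
  apply Subtype.ext
  have h3 : ((a * b : ↥Γ) : EuclideanSpace ℝ (Fin k) ≃ᵢ EuclideanSpace ℝ (Fin k))
      = Γ.subtype a * Γ.subtype b := rfl
  have h4 : ((b * a : ↥Γ) : EuclideanSpace ℝ (Fin k) ≃ᵢ EuclideanSpace ℝ (Fin k))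
      = Γ.subtype b * Γ.subtype a := rfl
  rw [h3, h4, h2]
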